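/- Let X be a reflexive Banach space with dual Y, φ ∈ Γ₀(X), ε > 0, M = Graph(∂φ), and A = {0} × closed-ball_Y(0,ε). Then for every y ∈ Y the section {x ∈ X : (x,y) ∈ M + A} equals ⋃_{‖ȳ - y‖ ≤ ε} ∂φ*(ȳ), and this set is closed (in the norm topology of X). -/

import Mathlib

noncomputable section
open scoped Pointwise

/-- Convexity for `EReal`-valued functions. -/
def ConvexE {V : Type*} [AddCommGroup V] [Module ℝ V] (f : V → EReal) : Prop :=
  ∀ x₁ x₂ : V, ∀ a b : ℝ, 0 ≤ a → 0 ≤ b → a + b = 1 →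
    f (a • x₁ + b • x₂) ≤ (a : EReal) * f x₁ + (b : EReal) * f x₂

/-- `Γ₀`: proper, convex, lower semicontinuous, with values in `ℝ ∪ {+∞}`. -/
def Gamma0 {V : Type*} [AddCommGroup V] [Module ℝ V] [TopologicalSpace V]
    (f : V → EReal) : Prop :=
  (∀ v, f v ≠ ⊥) ∧ (∃ v, f v ≠ ⊤) ∧ ConvexE f ∧ LowerSemicontinuous f

/-- Subdifferential with respect to a pairing `p`. -/
def subdiffE {V W : Type*} [AddCommGroup V] [Module ℝ V]
    (p : V → W → ℝ) (f : V → EReal) (x : V) : Set W :=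
  {u | ∀ z, (p (z - x) u : EReal) + f x ≤ f z}

/-- Bipotential with respect to the duality pairing `p`. -/
def IsBipotential {X Y : Type*} [AddCommGroup X] [Module ℝ X] [TopologicalSpace X]
    [AddCommGroup Y] [Module ℝ Y] [TopologicalSpace Y]
    (p : X → Y → ℝ) (b : X → Y → EReal) : Prop :=
  (∀ x y, b x y ≠ ⊥) ∧
  (∀ x, (∃ y, b x y ≠ ⊤) → Gamma0 (b x)) ∧
  (∀ y, (∃ x, b x y ≠ ⊤) → Gamma0 (fun x => b x y)) ∧
  (∀ x y, (p x y : EReal) ≤ b x y) ∧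
  (∀ x y,
    (y ∈ subdiffE p (fun x' => b x' y) x ↔ b x y = (p x y : EReal)) ∧
    (x ∈ subdiffE (fun y' x' => p x' y') (b x) y ↔ b x y = (p x y : EReal)))

/-- The graph `M(b)` of a bipotential. -/
def MGraph {X Y : Type*} (p : X → Y → ℝ) (b : X → Y → EReal) : Set (X × Y) :=
  {q | b q.1 q.2 = (p q.1 q.2 : EReal)}

/-- Synchronised convex function (sync). -/
def IsSync {X Y : Type*} [AddCommGroup X] [Module ℝ X] [TopologicalSpace X]
    [AddCommGroup Y] [Module ℝ Y] [TopologicalSpace Y]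
    (c : X → Y → EReal) : Prop :=
  (∀ x y, 0 ≤ c x y) ∧
  (∀ x, (∃ y, c x y ≠ ⊤) → Gamma0 (c x)) ∧
  (∀ y, (∃ x, c x y ≠ ⊤) → Gamma0 (fun x => c x y)) ∧
  (∀ x, (∃ y', c x y' ≠ ⊤) → ∀ y, (∀ y', c x y ≤ c x y') → c x y = 0) ∧
  (∀ y, (∃ x', c x' y ≠ ⊤) → ∀ x, (∀ x', c x y ≤ c x' y) → c x y = 0)

/-- A BB-graph: all sections are convex and closed. -/
def IsBBGraph {X Y : Type*} [AddCommGroup X] [Module ℝ X] [TopologicalSpace X]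
    [AddCommGroup Y] [Module ℝ Y] [TopologicalSpace Y] (M : Set (X × Y)) : Prop :=
  (∀ x, Convex ℝ {y | (x, y) ∈ M} ∧ IsClosed {y | (x, y) ∈ M}) ∧
  (∀ y, Convex ℝ {x | (x, y) ∈ M} ∧ IsClosed {x | (x, y) ∈ M})

variable {X : Type*} [NormedAddCommGroup X] [NormedSpace ℝ X]

/-- Fenchel conjugate of `φ : X → ℝ ∪ {+∞}`, defined on the dual space. -/
def fenchelConj (φ : X → EReal) (y : X →L[ℝ] ℝ) : EReal :=
  ⨆ x : X, (y x : EReal) - φ x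

/-- Subdifferential of `φ : X → ℝ ∪ {+∞}`, with values in the dual space. -/
def subdiff (φ : X → EReal) (x : X) : Set (X →L[ℝ] ℝ) :=
  {u | ∀ z : X, (u (z - x) : EReal) + φ x ≤ φ z}

/-- Subdifferential of a function on the dual space, with values in `X`
(identifying `X` with its bidual via reflexivity). -/
def subdiffStar (ψ : (X →L[ℝ] ℝ) → EReal) (y : X →L[ℝ] ℝ) : Set X :=
  {x | ∀ z : X →L[ℝ] ℝ, (((z - y) x) : EReal) + ψ y ≤ ψ z}


section AuxSection
open Topology
variable {X : Type*} [NormedAddCommGroup X] [NormedSpace ℝ X]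

namespace Aux

variable {φ : X → EReal}

lemma young {y : X →L[ℝ] ℝ} {v : X} {s : ℝ} (hv : φ v = (s : ℝ)) :
    ((y v - s : ℝ) : EReal) ≤ fenchelConj φ y := by
  have : ((y v - s : ℝ) : EReal) = (y v : EReal) - φ v := by
    rw [hv, ← EReal.coe_sub]
  rw [this]
  exact le_iSup (fun x => (y x : EReal) - φ x) v

lemma conj_le (hbot : ∀ v, φ v ≠ ⊥) {y : X →L[ℝ] ℝ} {c : ℝ}
    (h : ∀ v : X, ∀ s : ℝ, φ v = (s : ℝ) → y v - s ≤ c) :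
    fenchelConj φ y ≤ (c : EReal) := by
  refine iSup_le fun v => ?_
  by_cases ht : φ v = ⊤
  · rw [ht, EReal.sub_top]; exact bot_le
  · have hv : φ v = ((φ v).toReal : ℝ) := (EReal.coe_toReal ht (hbot v)).symm
    rw [hv, ← EReal.coe_sub]
    exact_mod_cast h v _ hv

lemma conj_ne_bot (hbot : ∀ v, φ v ≠ ⊥) {x₀ : X} {r₀ : ℝ} (hx₀ : φ x₀ = (r₀ : ℝ))
    (y : X →L[ℝ] ℝ) : fenchelConj φ y ≠ ⊥ := by
  intro h
  have := young (y := y) hx₀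
  rw [h, le_bot_iff] at this
  exact EReal.coe_ne_bot _ this

end Aux

namespace Aux

variable {φ : X → EReal}

lemma epi_convex (hbot : ∀ v, φ v ≠ ⊥) (hconv : ConvexE φ) :
    Convex ℝ {p : X × ℝ | φ p.1 ≤ (p.2 : EReal)} := by
  rintro ⟨v₁, t₁⟩ h₁ ⟨v₂, t₂⟩ h₂ a b ha hb hab
  simp only [Set.mem_setOf_eq] at h₁ h₂ ⊢
  have hnt₁ : φ v₁ ≠ ⊤ := fun h => by simp [h] at h₁
  have hnt₂ : φ v₂ ≠ ⊤ := fun h => by simp [h] at h₂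
  set s₁ := (φ v₁).toReal with hs₁def
  set s₂ := (φ v₂).toReal with hs₂def
  have hv₁ : φ v₁ = (s₁ : ℝ) := (EReal.coe_toReal hnt₁ (hbot v₁)).symm
  have hv₂ : φ v₂ = (s₂ : ℝ) := (EReal.coe_toReal hnt₂ (hbot v₂)).symm
  have hs₁ : s₁ ≤ t₁ := by rw [hv₁] at h₁; exact_mod_cast h₁
  have hs₂ : s₂ ≤ t₂ := by rw [hv₂] at h₂; exact_mod_cast h₂
  have := hconv v₁ v₂ a b ha hb hab
  rw [hv₁, hv₂, ← EReal.coe_mul, ← EReal.coe_mul, ← EReal.coe_add] at this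
  refine this.trans ?_
  have : a * s₁ + b * s₂ ≤ a * t₁ + b * t₂ := by
    have := mul_le_mul_of_nonneg_left hs₁ ha
    have := mul_le_mul_of_nonneg_left hs₂ hb
    linarith
  exact_mod_cast this

lemma epi_closed (hlsc : LowerSemicontinuous φ) :
    IsClosed {p : X × ℝ | φ p.1 ≤ (p.2 : EReal)} := by
  rw [← isOpen_compl_iff, isOpen_iff_mem_nhds]
  rintro ⟨v, t⟩ hv
  simp only [Set.mem_compl_iff, Set.mem_setOf_eq, not_le] at hv
  obtain ⟨q, hq1, hq2⟩ := EReal.exists_between_coe_real hv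
  have h1 : ∀ᶠ w in nhds v, (q : EReal) < φ w := hlsc v _ hq2
  have h2 : ∀ᶠ s in nhds t, s < q :=
    Filter.Tendsto.eventually_lt_const (by exact_mod_cast hq1) Filter.tendsto_id
  refine Filter.mem_of_superset (h1.prod_nhds h2) ?_
  rintro ⟨w, s⟩ ⟨hw, hs⟩
  simp only [Set.mem_compl_iff, Set.mem_setOf_eq, not_le]
  calc ((s:ℝ) : EReal) < (q : ℝ) := by exact_mod_cast hs
    _ < φ w := hw

lemma decomp (f : (X × ℝ) →L[ℝ] ℝ) (v : X) (t : ℝ) :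
    f (v, t) = f.comp (ContinuousLinearMap.inl ℝ X ℝ) v + t * f (0, 1) := by
  have : ((v, t) : X × ℝ) = (v, 0) + t • ((0 : X), (1 : ℝ)) := by
    simp [Prod.ext_iff]
  rw [this, map_add, map_smul]
  simp [ContinuousLinearMap.comp_apply, smul_eq_mul]

/-- Step A : the conjugate is somewhere finite. -/
lemma exists_conj_le (hbot : ∀ v, φ v ≠ ⊥) (hconv : ConvexE φ)
    (hlsc : LowerSemicontinuous φ) {x₀ : X} {r₀ : ℝ} (hx₀ : φ x₀ = (r₀ : ℝ)) :
    ∃ (z₀ : X →L[ℝ] ℝ) (c₀ : ℝ), fenchelConj φ z₀ ≤ (c₀ : EReal) := by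
  set E := {p : X × ℝ | φ p.1 ≤ (p.2 : EReal)} with hE
  have hnot : ((x₀, r₀ - 1) : X × ℝ) ∉ E := by
    simp only [hE, Set.mem_setOf_eq, hx₀, not_le]
    exact_mod_cast sub_one_lt r₀
  obtain ⟨f, u, hfx, hfE⟩ :=
    geometric_hahn_banach_point_closed (epi_convex hbot hconv) (epi_closed hlsc) hnot
  set g := f.comp (ContinuousLinearMap.inl ℝ X ℝ) with hg
  set a := f (0, 1) with ha
  have hmem : ((x₀, r₀) : X × ℝ) ∈ E := by simp [hE, hx₀]
  have h1 : g x₀ + (r₀ - 1) * a < u := by rw [← decomp]; exact hfx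
  have h2 : u < g x₀ + r₀ * a := by
    have := hfE _ hmem; rw [decomp f x₀ r₀] at this; rw [hg, ha]; exact this
  have hapos : 0 < a := by nlinarith
  refine ⟨-(a⁻¹) • g, -(u / a), conj_le hbot ?_⟩
  intro v s hv
  have hmem : ((v, s) : X × ℝ) ∈ E := by simp [hE, hv]
  have h3 : u < g v + s * a := by
    have := hfE _ hmem; rw [decomp f v s] at this; rw [hg, ha]; exact this
  have happ : (-(a⁻¹) • g) v = -(a⁻¹) * g v := rfl
  rw [happ]
  rw [show -(u / a) = (-u) / a by ring, le_div_iff₀ hapos]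
  have hane : a ≠ 0 := ne_of_gt hapos
  have : (-(a⁻¹) * g v - s) * a = -(g v) - s * a := by field_simp
  rw [this]; linarith

end Aux

namespace Aux
variable {φ : X → EReal}

/-- Fenchel–Moreau. -/
lemma fenchelMoreau (hbot : ∀ v, φ v ≠ ⊥) (hconv : ConvexE φ)
    (hlsc : LowerSemicontinuous φ) {x₀ : X} {r₀ : ℝ} (hx₀ : φ x₀ = (r₀ : ℝ))
    (x : X) (c : ℝ)
    (h : ∀ z : X →L[ℝ] ℝ, ∀ τ : ℝ, fenchelConj φ z = (τ : EReal) → z x - τ ≤ c) :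
    φ x ≤ (c : EReal) := by
  by_contra hcon
  replace hcon : (c : EReal) < φ x := not_le.mp hcon
  -- realize a conjugate value: given an upper bound, φ* z is real
  have real_conj : ∀ (z : X →L[ℝ] ℝ) (d : ℝ), fenchelConj φ z ≤ (d : EReal) →
      ∃ τ : ℝ, fenchelConj φ z = (τ : EReal) ∧ τ ≤ d := by
    intro z d hd
    have hnt : fenchelConj φ z ≠ ⊤ := fun ht => by
      rw [ht] at hd; exact absurd hd (by simp)
    have hnb : fenchelConj φ z ≠ ⊥ := conj_ne_bot hbot hx₀ z
    refine ⟨(fenchelConj φ z).toReal, (EReal.coe_toReal hnt hnb).symm, ?_⟩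
    have := (EReal.coe_toReal hnt hnb)
    rw [← this] at hd; exact_mod_cast hd
  set E := {p : X × ℝ | φ p.1 ≤ (p.2 : EReal)} with hE
  have hnot : ((x, c) : X × ℝ) ∉ E := by
    simp only [hE, Set.mem_setOf_eq, not_le]; exact hcon
  obtain ⟨f, u, hfx, hfE⟩ :=
    geometric_hahn_banach_point_closed (epi_convex hbot hconv) (epi_closed hlsc) hnot
  set g := f.comp (ContinuousLinearMap.inl ℝ X ℝ) with hg
  set a := f (0, 1) with ha
  have hgx : g x + c * a < u := by
    have := hfx; rw [decomp f x c] at this; rw [hg, ha]; exact this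
  have hEgen : ∀ (v : X) (s : ℝ), φ v = (s : ℝ) → ∀ t : ℝ, s ≤ t → u < g v + t * a := by
    intro v s hv t hst
    have hmem : ((v, t) : X × ℝ) ∈ E := by
      simp only [hE, Set.mem_setOf_eq, hv]; exact_mod_cast hst
    have := hfE _ hmem; rw [decomp f v t] at this; rw [hg, ha]; exact this
  have hanneg : 0 ≤ a := by
    by_contra hneg
    push_neg at hneg
    set n := max 0 ((u - g x₀ - r₀ * a) / a) with hn
    have hn0 : 0 ≤ n := le_max_left _ _
    have h1 : u < g x₀ + (r₀ + n) * a := hEgen x₀ r₀ hx₀ _ (by linarith)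
    have h2 : n * a ≤ u - g x₀ - r₀ * a := by
      have hq : (u - g x₀ - r₀ * a) / a ≤ n := le_max_right _ _
      have := mul_le_mul_of_nonpos_right hq (le_of_lt hneg)
      rwa [div_mul_cancel₀ _ (ne_of_lt hneg)] at this
    nlinarith
  rcases hanneg.lt_or_eq with hapos | hazero
  · -- a > 0
    set z : X →L[ℝ] ℝ := -(a⁻¹) • g with hz
    have hconj : fenchelConj φ z ≤ ((-(u / a) : ℝ) : EReal) := by
      refine conj_le hbot ?_
      intro v s hv
      have h3 : u < g v + s * a := hEgen v s hv s le_rfl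
      have happ : z v = -(a⁻¹) * g v := rfl
      rw [happ, show -(u / a) = (-u) / a by ring, le_div_iff₀ hapos]
      have : (-(a⁻¹) * g v - s) * a = -(g v) - s * a := by field_simp
      rw [this]; linarith
    obtain ⟨τ, hτ, hτle⟩ := real_conj z _ hconj
    have hzc := h z τ hτ
    have happx : z x = -(a⁻¹) * g x := rfl
    rw [happx] at hzc
    have e1 : a * (-a⁻¹ * g x - τ) = -(g x) - a * τ := by field_simp
    have e2 : a * (-(u / a)) = -u := by field_simp [mul_comm]
    have f1 := mul_le_mul_of_nonneg_left hzc hapos.le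
    have f2 := mul_le_mul_of_nonneg_left hτle hapos.le
    rw [e1] at f1; rw [e2] at f2
    nlinarith
  · -- a = 0
    obtain ⟨z₀, c₀, hz₀⟩ := exists_conj_le hbot hconv hlsc hx₀
    obtain ⟨τ₀, hτ₀, hτ₀le⟩ := real_conj z₀ _ hz₀
    have hgu : ∀ (v : X) (s : ℝ), φ v = (s : ℝ) → u < g v := by
      intro v s hv
      have := hEgen v s hv s le_rfl
      rwa [← hazero, mul_zero, add_zero] at this
    have hxu : g x < u := by rw [← hazero, mul_zero, add_zero] at hgx; exact hgx
    have hpos : 0 < u - g x := by linarith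
    set lam := max 0 ((c + τ₀ - z₀ x + 1) / (u - g x)) with hlam
    have hlam0 : 0 ≤ lam := le_max_left _ _
    have hlammul : c + τ₀ - z₀ x + 1 ≤ lam * (u - g x) := by
      have hq : (c + τ₀ - z₀ x + 1) / (u - g x) ≤ lam := le_max_right _ _
      have := mul_le_mul_of_nonneg_right hq (le_of_lt hpos)
      rwa [div_mul_cancel₀ _ (ne_of_gt hpos)] at this
    set z : X →L[ℝ] ℝ := z₀ - lam • g with hz
    have hconj : fenchelConj φ z ≤ ((τ₀ - lam * u : ℝ) : EReal) := by
      refine conj_le hbot ?_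
      intro v s hv
      have h4 : z₀ v - s ≤ τ₀ := by
        have := young (y := z₀) hv
        rw [hτ₀] at this; exact_mod_cast this
      have h5 : u < g v := hgu v s hv
      have happ : z v = z₀ v - lam * g v := rfl
      rw [happ]
      have : lam * u ≤ lam * g v := mul_le_mul_of_nonneg_left (le_of_lt h5) hlam0
      linarith
    obtain ⟨τ, hτ, hτle⟩ := real_conj z _ hconj
    have hzc := h z τ hτ
    have happx : z x = z₀ x - lam * g x := rfl
    rw [happx] at hzc
    linarith

end Aux

namespace Aux
variable {φ : X → EReal}

lemma subdiff_conj_eq (hbot : ∀ v, φ v ≠ ⊥) {x₀ : X} {r₀ : ℝ} (hx₀ : φ x₀ = (r₀ : ℝ))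
    {x : X} {y : X →L[ℝ] ℝ} (h : y ∈ subdiff φ x) :
    ∃ r : ℝ, φ x = (r : EReal) ∧ fenchelConj φ y = ((y x - r : ℝ) : EReal) := by
  have hnt : φ x ≠ ⊤ := by
    intro ht
    have := h x₀
    rw [ht] at this
    have htop : (((y (x₀ - x) : ℝ)) : EReal) + ⊤ = ⊤ := EReal.add_top_of_ne_bot (EReal.coe_ne_bot _)
    rw [htop, top_le_iff] at this
    rw [hx₀] at this
    exact EReal.coe_ne_top _ this
  set r := (φ x).toReal with hrdef
  have hx : φ x = (r : ℝ) := (EReal.coe_toReal hnt (hbot x)).symm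
  refine ⟨r, hx, le_antisymm ?_ (young hx)⟩
  refine conj_le hbot ?_
  intro v s hv
  have := h v
  rw [hx, hv, map_sub, ← EReal.coe_add] at this
  have : y v - y x + r ≤ s := by exact_mod_cast this
  linarith

lemma subdiff_iff_subdiffStar (hbot : ∀ v, φ v ≠ ⊥) (hconv : ConvexE φ)
    (hlsc : LowerSemicontinuous φ) {x₀ : X} {r₀ : ℝ} (hx₀ : φ x₀ = (r₀ : ℝ))
    (x : X) (y : X →L[ℝ] ℝ) :
    y ∈ subdiff φ x ↔ x ∈ subdiffStar (fenchelConj φ) y := by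
  constructor
  · intro h
    obtain ⟨r, hx, hconjy⟩ := subdiff_conj_eq hbot hx₀ h
    intro z
    rw [hconjy, ContinuousLinearMap.sub_apply, ← EReal.coe_add]
    have : (z x - y x) + (y x - r) = z x - r := by ring
    rw [this]
    exact young hx
  · intro h
    -- φ* y is finite
    obtain ⟨z₀, c₀, hz₀⟩ := exists_conj_le hbot hconv hlsc hx₀
    have hnt : fenchelConj φ y ≠ ⊤ := by
      intro ht
      have := h z₀
      rw [ht] at this
      have htop : ((((z₀ - y) x : ℝ)) : EReal) + ⊤ = ⊤ :=
        EReal.add_top_of_ne_bot (EReal.coe_ne_bot _)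
      rw [htop, top_le_iff] at this
      rw [this] at hz₀
      exact absurd hz₀ (by simp)
    have hnb : fenchelConj φ y ≠ ⊥ := conj_ne_bot hbot hx₀ y
    set t := (fenchelConj φ y).toReal with htdef
    have hty : fenchelConj φ y = (t : ℝ) := (EReal.coe_toReal hnt hnb).symm
    -- Fenchel–Moreau gives φ x ≤ y x - t
    have hFM : φ x ≤ ((y x - t : ℝ) : EReal) := by
      refine fenchelMoreau hbot hconv hlsc hx₀ x _ ?_
      intro z τ hτ
      have := h z
      rw [hty, hτ, ContinuousLinearMap.sub_apply, ← EReal.coe_add] at this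
      have : (z x - y x) + t ≤ τ := by exact_mod_cast this
      linarith
    have hxnt : φ x ≠ ⊤ := fun ht => by rw [ht] at hFM; exact EReal.coe_ne_top _ (top_le_iff.mp hFM)
    set r := (φ x).toReal with hrdef
    have hx : φ x = (r : ℝ) := (EReal.coe_toReal hxnt (hbot x)).symm
    have hrle : r ≤ y x - t := by rw [hx] at hFM; exact_mod_cast hFM
    have hge : y x - r ≤ t := by
      have := young (y := y) hx
      rw [hty] at this; exact_mod_cast this
    -- conclude subgradient inequality
    intro w
    by_cases hwt : φ w = ⊤
    · rw [hwt]; exact le_top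
    · set s := (φ w).toReal with hsdef
      have hw : φ w = (s : ℝ) := (EReal.coe_toReal hwt (hbot w)).symm
      have hyw : y w - s ≤ t := by
        have := young (y := y) hw
        rw [hty] at this; exact_mod_cast this
      rw [hx, hw, map_sub, ← EReal.coe_add]
      have : y w - y x + r ≤ s := by linarith
      exact_mod_cast this

end Aux

namespace Aux
variable {φ : X → EReal}

lemma closed_section (hbot : ∀ v, φ v ≠ ⊥) (hlsc : LowerSemicontinuous φ)
    (y : X →L[ℝ] ℝ) {ε : ℝ} (hε : 0 ≤ ε) :
    IsClosed {x : X | ∃ y' : X →L[ℝ] ℝ, dist y' y ≤ ε ∧ y' ∈ subdiff φ x} := by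
  apply IsSeqClosed.isClosed
  intro u x hu hux
  choose w hw1 hw2 using hu
  set R := ‖y‖ + ε with hR
  have hwn : ∀ n, ‖w n‖ ≤ R := by
    intro n
    have h1 : ‖w n‖ - ‖y‖ ≤ ‖w n - y‖ := norm_sub_norm_le _ _
    have h2 : ‖w n - y‖ ≤ ε := by rw [← dist_eq_norm]; exact hw1 n
    rw [hR]; linarith
  set K := (⇑WeakDual.toStrongDual ⁻¹' Metric.closedBall (0 : StrongDual ℝ X) R) with hK
  have hKc : IsCompact K := WeakDual.isCompact_closedBall (𝕜 := ℝ) 0 R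
  set g : ℕ → WeakDual ℝ X := fun n => StrongDual.toWeakDual (w n) with hg
  have hwR : ∀ n, g n ∈ K := by
    intro n
    simp only [hK, Set.mem_preimage, Metric.mem_closedBall, dist_zero_right]
    exact hwn n
  set U : Ultrafilter ℕ := Ultrafilter.of Filter.atTop with hUdef
  have hU : (U : Filter ℕ) ≤ Filter.atTop := Ultrafilter.of_le _
  have hle : (U.map g : Filter (WeakDual ℝ X)) ≤ Filter.principal K := by
    rw [Ultrafilter.coe_map, Filter.le_principal_iff, Filter.mem_map]
    exact Filter.univ_mem' hwR
  obtain ⟨η, hηK, hηlim⟩ := hKc.ultrafilter_le_nhds (U.map g) hle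
  have hηlim' : Filter.Tendsto g (U : Filter ℕ) (nhds η) := by
    rw [Filter.Tendsto, ← Ultrafilter.coe_map]; exact hηlim
  set y' : X →L[ℝ] ℝ := WeakDual.toStrongDual η with hy'
  have hev : ∀ v : X, Filter.Tendsto (fun n => w n v) (U : Filter ℕ) (nhds (y' v)) := by
    intro v
    have hc : Continuous fun (f : WeakDual ℝ X) => f v := WeakDual.eval_continuous v
    exact (hc.tendsto η).comp hηlim'
  have hdist : dist y' y ≤ ε := by
    rw [dist_eq_norm]
    refine ContinuousLinearMap.opNorm_le_bound _ hε fun v => ?_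
    have h1 : Filter.Tendsto (fun n => ‖w n v - y v‖) (U : Filter ℕ) (nhds ‖y' v - y v‖) :=
      ((hev v).sub tendsto_const_nhds).norm
    have h2 : ‖(y' - y) v‖ = ‖y' v - y v‖ := by simp
    rw [h2]
    refine le_of_tendsto h1 (Filter.Eventually.of_forall fun n => ?_)
    calc ‖w n v - y v‖ = ‖(w n - y) v‖ := by simp
      _ ≤ ‖w n - y‖ * ‖v‖ := (w n - y).le_opNorm v
      _ ≤ ε * ‖v‖ := by
          refine mul_le_mul_of_nonneg_right ?_ (norm_nonneg v)
          rw [← dist_eq_norm]; exact hw1 n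
  have key : ∀ (z : X) (s : ℝ), φ z = (s : ℝ) → ∀ c : ℝ, (c : EReal) < φ x →
      y' (z - x) + c ≤ s := by
    intro z s hz c hc
    have ev1 : ∀ᶠ n in Filter.atTop, (c : EReal) < φ (u n) := hux.eventually (hlsc x c hc)
    have ev2 : ∀ᶠ n in Filter.atTop, w n (z - u n) + c ≤ s := by
      filter_upwards [ev1] with n hn
      have hle2 := hw2 n z
      rw [hz] at hle2
      have hnt : φ (u n) ≠ ⊤ := by
        intro ht; rw [ht, EReal.add_top_of_ne_bot (EReal.coe_ne_bot _), top_le_iff] at hle2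
        exact EReal.coe_ne_top _ hle2
      have hrn : φ (u n) = (((φ (u n)).toReal : ℝ) : EReal) := (EReal.coe_toReal hnt (hbot _)).symm
      rw [hrn] at hle2 hn
      rw [← EReal.coe_add] at hle2
      have h1 : w n (z - u n) + (φ (u n)).toReal ≤ s := by exact_mod_cast hle2
      have h2 : c < (φ (u n)).toReal := by exact_mod_cast hn
      linarith
    have hzero : Filter.Tendsto (fun n => w n (x - u n)) (U : Filter ℕ) (nhds 0) := by
      have hnorm : Filter.Tendsto (fun n => R * ‖x - u n‖) (U : Filter ℕ) (nhds 0) := by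
        have h0 : Filter.Tendsto (fun n => ‖u n - x‖) Filter.atTop (nhds 0) :=
          tendsto_iff_norm_sub_tendsto_zero.mp hux
        have h0' : Filter.Tendsto (fun n => ‖x - u n‖) Filter.atTop (nhds 0) := by
          simpa only [norm_sub_rev] using h0
        have := (tendsto_const_nhds (x := R)).mul (h0'.mono_left hU)
        simpa using this
      refine squeeze_zero_norm (fun n => ?_) hnorm
      calc ‖w n (x - u n)‖ ≤ ‖w n‖ * ‖x - u n‖ := (w n).le_opNorm _
        _ ≤ R * ‖x - u n‖ := mul_le_mul_of_nonneg_right (hwn n) (norm_nonneg _)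
    have hlim : Filter.Tendsto (fun n => w n (z - u n) + c) (U : Filter ℕ)
        (nhds (y' (z - x) + c)) := by
      have hsum : Filter.Tendsto (fun n => w n (z - x) + w n (x - u n)) (U : Filter ℕ)
          (nhds (y' (z - x) + 0)) := (hev (z - x)).add hzero
      rw [add_zero] at hsum
      have heq : (fun n => w n (z - x) + w n (x - u n)) = fun n => w n (z - u n) := by
        funext n; rw [← map_add]; congr 1; abel
      rw [heq] at hsum
      exact hsum.add tendsto_const_nhds
    exact le_of_tendsto hlim (ev2.filter_mono hU)
  refine ⟨y', hdist, fun z => ?_⟩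
  by_cases hzt : φ z = ⊤
  · rw [hzt]; exact le_top
  · have hz : φ z = (((φ z).toReal : ℝ) : EReal) := (EReal.coe_toReal hzt (hbot z)).symm
    set s := (φ z).toReal with hs
    by_cases hxt : φ x = ⊤
    · exfalso
      have := key z s hz (s - y' (z - x) + 1) (by rw [hxt]; exact EReal.coe_lt_top _)
      linarith
    · have hx' : φ x = (((φ x).toReal : ℝ) : EReal) := (EReal.coe_toReal hxt (hbot x)).symm
      set r := (φ x).toReal with hr
      rw [hx', hz, ← EReal.coe_add]
      have hfinal : y' (z - x) + r ≤ s := by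
        by_contra hlt
        push_neg at hlt
        set c := (s - y' (z - x) + r) / 2 with hc
        have hc1 : c < r := by rw [hc]; linarith
        have hc2 : s - y' (z - x) < c := by rw [hc]; linarith
        have := key z s hz c (by rw [hx']; exact_mod_cast hc1)
        linarith
      exact_mod_cast hfinal

end Aux
end AuxSection

/-- for `M = Graph(∂φ)` and `A = {0} × B̄_Y(0,ε)`, every section
`{x : (x,y) ∈ M + A}` equals `⋃_{‖y' - y‖ ≤ ε} ∂φ*(y')`, and this set is closed. -/
theorem blurred_section_eq_and_closed [CompleteSpace X]
    (hrefl : Function.Surjective (NormedSpace.inclusionInDoubleDual ℝ X))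
    (φ : X → EReal) (hφ : Gamma0 φ) (ε : ℝ) (hε : 0 < ε)
    (M A : Set (X × (X →L[ℝ] ℝ)))
    (hM : M = {q | q.2 ∈ subdiff φ q.1})
    (hA : A = {0} ×ˢ Metric.closedBall 0 ε) :
    ∀ y : X →L[ℝ] ℝ,
      {x | (x, y) ∈ M + A} =
        (⋃ y' ∈ Metric.closedBall y ε, subdiffStar (fenchelConj φ) y') ∧
      IsClosed (⋃ y' ∈ Metric.closedBall y ε, subdiffStar (fenchelConj φ) y') := by
  classical
  intro y
  obtain ⟨hbot, hproper, hconv, hlsc⟩ := hφ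
  obtain ⟨x₀v, hx₀v⟩ := hproper
  have hx₀ : φ x₀v = (((φ x₀v).toReal : ℝ) : EReal) := (EReal.coe_toReal hx₀v (hbot _)).symm
  have hiff : ∀ (x : X) (y' : X →L[ℝ] ℝ),
      y' ∈ subdiff φ x ↔ x ∈ subdiffStar (fenchelConj φ) y' := fun x y' =>
    Aux.subdiff_iff_subdiffStar hbot hconv hlsc hx₀ x y'
  have hset : (⋃ y' ∈ Metric.closedBall y ε, subdiffStar (fenchelConj φ) y') =
      {x : X | ∃ y' : X →L[ℝ] ℝ, dist y' y ≤ ε ∧ y' ∈ subdiff φ x} := by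
    ext x
    simp only [Set.mem_iUnion, Metric.mem_closedBall, Set.mem_setOf_eq, exists_prop]
    exact exists_congr fun y' => and_congr_right fun _ => (hiff x y').symm
  constructor
  · rw [hset]
    ext x
    simp only [Set.mem_setOf_eq]
    constructor
    · intro hx
      rw [Set.mem_add] at hx
      obtain ⟨m, hm, a, haA, hma⟩ := hx
      rw [hM] at hm
      rw [hA, Set.mem_prod] at haA
      obtain ⟨ha1, ha2⟩ := haA
      have ha0 : a.1 = 0 := by simpa using ha1
      have h1 : m.1 + a.1 = x := congrArg Prod.fst hma
      have h2 : m.2 + a.2 = y := congrArg Prod.snd hma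
      rw [ha0, add_zero] at h1
      refine ⟨m.2, ?_, by rw [← h1]; exact hm⟩
      have : m.2 - y = -a.2 := by rw [← h2]; abel
      rw [dist_eq_norm, this, norm_neg, ← dist_zero_right]
      exact Metric.mem_closedBall.mp ha2
    · rintro ⟨y', hd, hsub⟩
      rw [Set.mem_add]
      refine ⟨(x, y'), by rw [hM]; exact hsub, (0, y - y'), ?_, ?_⟩
      · rw [hA, Set.mem_prod]
        refine ⟨rfl, ?_⟩
        rw [Metric.mem_closedBall, dist_zero_right, ← dist_eq_norm, dist_comm]
        exact hd
      · ext <;> simp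
  · rw [hset]
    exact Aux.closed_section hbot hlsc y hε.le
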